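/- The Laplace transform of Ψ(t) = dexp(-μt; -μτ) is 1/(s + μ e^{-sτ}) for all real s sufficiently large (s > 0 with s > μ e^{-sτ} suffices), where the transform is ∫_0^∞ e^{-st} Ψ(t) dt. -/

import Mathlib

open Real Set MeasureTheory

noncomputable def dexp (μ τ t : ℝ) : ℝ :=
  ∑' n : ℕ, (-μ) ^ n * (t - n * τ) ^ n / (Nat.factorial n) * (if (n : ℝ) * τ ≤ t then 1 else 0)

section aux

lemma restrict_shift (a : ℝ) :
    (volume : Measure ℝ).restrict (Ioi a)
      = Measure.map (⇑(MeasurableEquiv.addRight a)) (volume.restrict (Ioi 0)) := by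
  have h1 : (⇑(MeasurableEquiv.addRight a)) ⁻¹' (Ioi a) = Ioi (0 : ℝ) := by
    ext x; simp [mem_Ioi, MeasurableEquiv.coe_addRight]
  have h0 : Measure.map (⇑(MeasurableEquiv.addRight a)) (volume : Measure ℝ) = volume := by
    rw [MeasurableEquiv.coe_addRight]; exact map_add_right_eq_self volume a
  nth_rewrite 1 [← h0]
  rw [Measure.restrict_map (MeasurableEquiv.addRight a).measurable measurableSet_Ioi, h1]

lemma integrableOn_exp_pow {s : ℝ} (hs : 0 < s) (n : ℕ) :
    IntegrableOn (fun t : ℝ => Real.exp (-(s * t)) * t ^ n) (Ioi 0) := by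
  have h := integrableOn_rpow_mul_exp_neg_mul_rpow (p := 1) (s := (n : ℝ)) (b := s)
    (lt_of_lt_of_le (by norm_num) (Nat.cast_nonneg n)) one_pos hs
  refine h.congr_fun (fun x hx => ?_) measurableSet_Ioi
  dsimp only
  rw [Real.rpow_one, Real.rpow_natCast, mul_comm, neg_mul]

lemma integral_exp_pow {s : ℝ} (hs : 0 < s) (n : ℕ) :
    ∫ t in Ioi (0:ℝ), Real.exp (-(s * t)) * t ^ n = n.factorial / s ^ (n + 1) := by
  have h := Real.integral_rpow_mul_exp_neg_mul_Ioi (a := (n : ℝ) + 1) (r := s)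
    (by positivity) hs
  rw [show ((n:ℝ) + 1) - 1 = (n:ℝ) by ring] at h
  have h2 : ∫ t in Ioi (0:ℝ), Real.exp (-(s * t)) * t ^ n
      = ∫ t in Ioi (0:ℝ), t ^ ((n:ℝ)) * Real.exp (-(s * t)) := by
    refine setIntegral_congr_fun measurableSet_Ioi (fun x hx => ?_)
    rw [Real.rpow_natCast, mul_comm]
  have h3 : Real.Gamma ((n:ℝ) + 1) = n.factorial := Real.Gamma_nat_eq_factorial n
  have h4 : ((1:ℝ)/s) ^ ((n:ℝ) + 1) = (1/s) ^ (n + 1 : ℕ) := by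
    rw [← Real.rpow_natCast (1/s) (n+1)]; push_cast; ring_nf
  rw [h2, h, h3, h4]
  rw [one_div, inv_pow]
  field_simp

lemma integrableOn_shift {s : ℝ} (hs : 0 < s) (n : ℕ) (a : ℝ) :
    IntegrableOn (fun t : ℝ => Real.exp (-(s * t)) * (t - a) ^ n) (Ioi a) := by
  rw [IntegrableOn, restrict_shift a,
    (MeasurableEquiv.addRight a).measurableEmbedding.integrable_map_iff]
  have hc : ((fun t : ℝ => Real.exp (-(s * t)) * (t - a) ^ n) ∘ (MeasurableEquiv.addRight a))
      = fun x : ℝ => Real.exp (-(s * a)) * (Real.exp (-(s * x)) * x ^ n) := by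
    funext x
    simp only [Function.comp_apply, MeasurableEquiv.coe_addRight, add_sub_cancel_right]
    rw [show -(s * (x + a)) = -(s * x) + -(s * a) by ring, Real.exp_add]
    ring
  rw [hc]
  exact (integrableOn_exp_pow hs n).const_mul _

lemma integral_shift {s : ℝ} (hs : 0 < s) (n : ℕ) (a : ℝ) :
    ∫ t in Ioi a, Real.exp (-(s * t)) * (t - a) ^ n
      = Real.exp (-(s * a)) * (n.factorial / s ^ (n + 1)) := by
  rw [restrict_shift a,
    (MeasurableEquiv.addRight a).measurableEmbedding.integral_map]
  have hc : ∀ x : ℝ, Real.exp (-(s * ((MeasurableEquiv.addRight a) x)))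
        * ((MeasurableEquiv.addRight a) x - a) ^ n
      = Real.exp (-(s * a)) * (Real.exp (-(s * x)) * x ^ n) := by
    intro x
    simp only [MeasurableEquiv.coe_addRight, add_sub_cancel_right]
    rw [show -(s * (x + a)) = -(s * x) + -(s * a) by ring, Real.exp_add]
    ring
  simp_rw [hc]
  rw [integral_const_mul, integral_exp_pow hs n]

lemma integral_ind_shift {s : ℝ} (hs : 0 < s) (n : ℕ) {a : ℝ} (ha : 0 ≤ a) :
    ∫ t in Ioi (0:ℝ), Real.exp (-(s * t)) * ((t - a) ^ n * (if a ≤ t then 1 else 0))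
      = Real.exp (-(s * a)) * (n.factorial / s ^ (n + 1)) := by
  have h1 : ∀ t : ℝ, Real.exp (-(s * t)) * ((t - a) ^ n * (if a ≤ t then 1 else 0))
      = Set.indicator (Ici a) (fun t => Real.exp (-(s * t)) * (t - a) ^ n) t := by
    intro t; by_cases h : a ≤ t <;> simp [Set.indicator, h]
  simp_rw [h1]
  rw [setIntegral_indicator measurableSet_Ici]
  have hset : (Ioi (0:ℝ) ∩ Ici a : Set ℝ) =ᵐ[volume] (Ioi a : Set ℝ) := by
    have h2 : (Ici a : Set ℝ) =ᵐ[volume] (Ioi a : Set ℝ) := Ioi_ae_eq_Ici.symm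
    refine (MeasureTheory.ae_eq_set_inter (Filter.EventuallyEq.refl _ _) h2).trans ?_
    rw [Ioi_inter_Ioi, max_eq_right ha]
    exact Filter.EventuallyEq.refl _ _
  rw [setIntegral_congr_set hset, integral_shift hs n a]

lemma integrableOn_ind_shift {s : ℝ} (hs : 0 < s) (n : ℕ) {a : ℝ} (ha : 0 ≤ a) :
    IntegrableOn (fun t : ℝ => Real.exp (-(s * t)) * ((t - a) ^ n * (if a ≤ t then 1 else 0)))
      (Ioi 0) := by
  have h1 : ∀ t : ℝ, Real.exp (-(s * t)) * ((t - a) ^ n * (if a ≤ t then 1 else 0))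
      = Set.indicator (Ici a) (fun t => Real.exp (-(s * t)) * (t - a) ^ n) t := by
    intro t; by_cases h : a ≤ t <;> simp [Set.indicator, h]
  simp_rw [IntegrableOn, h1]
  rw [integrable_indicator_iff measurableSet_Ici, IntegrableOn,
    Measure.restrict_restrict measurableSet_Ici]
  refine Integrable.mono_measure ?_ (Measure.restrict_mono inter_subset_left le_rfl)
  rw [← IntegrableOn, integrableOn_Ici_iff_integrableOn_Ioi]
  exact integrableOn_shift hs n a

end aux

/-- The Laplace transform of `Ψ(t) = dexp(-μt; -μτ)` is `1/(s + μ e^{-sτ})` for real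
`s > 0` with `μ e^{-sτ} < s`, assuming `0 ≤ μτ ≤ e⁻¹`. -/
theorem dexp_laplace_transform (μ τ : ℝ) (hμ : 0 < μ) (hτ : 0 ≤ τ)
    (hμτ : μ * τ ≤ (Real.exp 1)⁻¹) (s : ℝ) (hs : 0 < s)
    (hs' : μ * Real.exp (-s * τ) < s) :
    ∫ t in Ioi (0 : ℝ), Real.exp (-s * t) * dexp μ τ t
      = 1 / (s + μ * Real.exp (-s * τ)) := by
  have hsne : s ≠ 0 := ne_of_gt hs
  set E : ℝ := Real.exp (-(s * τ)) with hE
  have hEpos : 0 < E := Real.exp_pos _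
  have hE' : Real.exp (-s * τ) = E := by rw [hE, neg_mul]
  rw [hE'] at hs' ⊢
  set F : ℕ → ℝ → ℝ := fun n t => Real.exp (-s * t) *
      ((-μ) ^ n * (t - n * τ) ^ n / (Nat.factorial n) * (if (n : ℝ) * τ ≤ t then 1 else 0))
    with hF
  have hstep : ∀ t : ℝ, Real.exp (-s * t) * dexp μ τ t = ∑' n, F n t := by
    intro t
    rw [dexp, ← tsum_mul_left]
  have hrw : ∀ n : ℕ, ∀ t : ℝ, F n t = ((-μ) ^ n / (Nat.factorial n)) *
      (Real.exp (-(s * t)) * ((t - n * τ) ^ n * (if (n : ℝ) * τ ≤ t then 1 else 0))) := by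
    intro n t
    rw [show F n t = Real.exp (-s * t) * ((-μ) ^ n * (t - n * τ) ^ n / (Nat.factorial n) *
      (if (n : ℝ) * τ ≤ t then 1 else 0)) from rfl, neg_mul]
    ring
  have hnormrw : ∀ n : ℕ, ∀ t : ℝ, ‖F n t‖ = (μ ^ n / (Nat.factorial n)) *
      (Real.exp (-(s * t)) * ((t - n * τ) ^ n * (if (n : ℝ) * τ ≤ t then 1 else 0))) := by
    intro n t
    by_cases h : (n : ℝ) * τ ≤ t
    · rw [hrw n t, if_pos h, Real.norm_eq_abs, abs_mul, abs_div, abs_pow, abs_neg,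
        abs_of_pos hμ, abs_of_nonneg (Nat.cast_nonneg _), abs_mul,
        abs_of_pos (Real.exp_pos _), abs_mul, abs_pow,
        abs_of_nonneg (sub_nonneg.2 h), abs_of_nonneg (by norm_num : (0:ℝ) ≤ 1)]
    · rw [hrw n t, if_neg h]
      simp
  have hfacne : ∀ n : ℕ, ((Nat.factorial n : ℝ)) ≠ 0 := fun n => by
    exact_mod_cast (Nat.factorial_pos n).ne'
  have ha : ∀ n : ℕ, (0:ℝ) ≤ (n : ℝ) * τ := fun n => by positivity
  have hexpn : ∀ n : ℕ, Real.exp (-(s * ((n:ℝ) * τ))) = E ^ n := by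
    intro n
    rw [show -(s * ((n:ℝ) * τ)) = (n : ℝ) * (-(s * τ)) by ring, Real.exp_nat_mul]
  have hint : ∀ n : ℕ, Integrable (F n) (volume.restrict (Ioi 0)) := by
    intro n
    rw [show F n = fun t => ((-μ) ^ n / (Nat.factorial n)) *
        (Real.exp (-(s * t)) * ((t - n * τ) ^ n * (if (n : ℝ) * τ ≤ t then 1 else 0)))
      from funext (hrw n)]
    exact (integrableOn_ind_shift hs n (ha n)).const_mul _
  have hnormint : ∀ n : ℕ, ∫ t in Ioi (0:ℝ), ‖F n t‖ = (1 / s) * (μ * E / s) ^ n := by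
    intro n
    simp_rw [hnormrw n]
    rw [integral_const_mul, integral_ind_shift hs n (ha n), hexpn n]
    rw [div_pow, mul_pow]
    field_simp
    ring
  have hval : ∀ n : ℕ, ∫ t in Ioi (0:ℝ), F n t = (1 / s) * ((-μ) * E / s) ^ n := by
    intro n
    simp_rw [hrw n]
    rw [integral_const_mul, integral_ind_shift hs n (ha n), hexpn n]
    rw [div_pow, mul_pow]
    field_simp
    ring
  have hq1 : μ * E / s < 1 := (div_lt_one hs).2 hs'
  have hsummable : Summable (fun n : ℕ => ∫ t in Ioi (0:ℝ), ‖F n t‖) := by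
    simp_rw [hnormint]
    exact (summable_geometric_of_lt_one (by positivity) hq1).mul_left _
  have hsum := (hasSum_integral_of_summable_integral_norm hint hsummable).tsum_eq
  calc ∫ t in Ioi (0:ℝ), Real.exp (-s * t) * dexp μ τ t
      = ∫ t in Ioi (0:ℝ), ∑' n, F n t := by simp_rw [hstep]
    _ = ∑' n, ∫ t in Ioi (0:ℝ), F n t := hsum.symm
    _ = ∑' n : ℕ, (1 / s) * ((-μ) * E / s) ^ n := tsum_congr hval
    _ = (1 / s) * (1 - (-μ) * E / s)⁻¹ := by
        rw [tsum_mul_left, tsum_geometric_of_abs_lt_one ?_]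
        rw [abs_div, abs_of_pos hs, abs_mul, abs_neg, abs_of_pos hμ, abs_of_pos hEpos]
        exact (div_lt_one hs).2 hs'
    _ = 1 / (s + μ * E) := by
        have h0 : s + μ * E ≠ 0 := by positivity
        field_simp
        rw [sub_neg_eq_add]; exact div_self h0
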